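/- Let m divide n, m ≥ 2, and let P_k^{n,m} : ℤ/nℤ → ℤ/mℤ send x to (C(ι_n(x), k) mod m) where ι_n(x) ∈ {0,...,n-1} is the representative of x. If lcm(1,...,k) divides a_k ∈ ℤ, then the function x ↦ (a_k mod m) · P_k^{n,m}(x) is congruence preserving, i.e. for all x, y ∈ ℤ/nℤ, π_{n,m}(x - y) divides its difference at x and y. -/

import Mathlib

/-- `lcm(1, 2, ..., k)`, with `lcmUpTo 0 = 1` by convention. -/
def lcmUpTo (k : ℕ) : ℕ := (Finset.Icc 1 k).lcm id

lemma lem1 (c j k : ℕ) (h1 : 1 ≤ j) (h2 : j ≤ k) :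
    c ∣ lcmUpTo k * c.choose j := by
  have hj : j ∣ lcmUpTo k := Finset.dvd_lcm (by simp [Finset.mem_Icc, h1, h2])
  obtain ⟨t, ht⟩ := hj
  rcases Nat.eq_zero_or_pos c with rfl | hc
  · simp [Nat.choose_eq_zero_of_lt h1]
  · obtain ⟨j', rfl⟩ := Nat.exists_eq_add_of_le h1
    obtain ⟨c', rfl⟩ := Nat.exists_eq_add_of_le hc
    have key := Nat.add_one_mul_choose_eq c' j'
    -- succ c' * choose c' j' = choose (c'+1) (j'+1) * (j'+1)
    refine ⟨t * c'.choose j', ?_⟩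
    rw [ht]
    calc (1 + j') * t * ((1 + c').choose (1 + j'))
        = t * ((1 + c').choose (1 + j') * (1 + j')) := by ring
      _ = t * ((c' + 1).choose (j' + 1) * (j' + 1)) := by ring_nf
      _ = t * ((c' + 1) * c'.choose j') := by rw [← key]
      _ = (1 + c') * (t * c'.choose j') := by ring

lemma key (y c k : ℕ) :
    (c : ℤ) ∣ (lcmUpTo k : ℤ) * (((y + c).choose k : ℤ) - (y.choose k : ℤ)) := by
  rw [Nat.add_choose_eq]
  have hmem : (k, 0) ∈ Finset.HasAntidiagonal.antidiagonal k := by simp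
  rw [← Finset.add_sum_erase _ _ hmem]
  push_cast
  simp only [Nat.choose_self, Nat.choose_zero_right, Nat.cast_one, mul_one, one_mul,
    add_sub_cancel_left]
  rw [Finset.mul_sum]
  apply Finset.dvd_sum
  intro ij hij
  rw [Finset.mem_erase, Finset.HasAntidiagonal.mem_antidiagonal] at hij
  have h2 : 1 ≤ ij.2 := by
    rcases Nat.eq_zero_or_pos ij.2 with h0 | h0
    · exact absurd (Prod.ext (by omega) h0) hij.1
    · exact h0
  have h2k : ij.2 ≤ k := by omega
  have := lem1 c ij.2 k h2 h2k
  obtain ⟨t, ht⟩ := this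
  refine ⟨(t : ℤ) * (y.choose ij.1 : ℤ), ?_⟩
  have : (lcmUpTo k : ℤ) * (c.choose ij.2 : ℤ) = (c : ℤ) * t := by exact_mod_cast congrArg (Nat.cast : ℕ → ℤ) ht
  calc (lcmUpTo k : ℤ) * ((y.choose ij.1 : ℤ) * (c.choose ij.2 : ℤ))
      = ((lcmUpTo k : ℤ) * (c.choose ij.2 : ℤ)) * (y.choose ij.1 : ℤ) := by ring
    _ = ((c:ℤ) * t) * (y.choose ij.1 : ℤ) := by rw [this]
    _ = (c:ℤ) * ((t:ℤ) * (y.choose ij.1 : ℤ)) := by ring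

lemma key2 (u v k : ℕ) : ((u : ℤ) - v) ∣ (lcmUpTo k : ℤ) * ((u.choose k : ℤ) - (v.choose k : ℤ)) := by
  rcases le_total v u with h | h
  · obtain ⟨c, rfl⟩ := Nat.exists_eq_add_of_le h
    have := key v c k
    simpa using this
  · obtain ⟨c, rfl⟩ := Nat.exists_eq_add_of_le h
    have := key u c k
    rw [show ((u:ℤ) - (u + c : ℕ)) = -(c:ℤ) by push_cast; ring, neg_dvd]
    have h2 : (lcmUpTo k : ℤ) * ((u.choose k : ℤ) - ((u + c).choose k : ℤ))
        = -((lcmUpTo k : ℤ) * (((u + c).choose k : ℤ) - (u.choose k : ℤ))) := by ring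
    rw [h2]
    exact Dvd.dvd.neg_right this

theorem stmt_5 (n m : ℕ) (hn : 0 < n) (hm : 2 ≤ m) (hmn : m ∣ n) (k : ℕ) (a : ℤ)
    (h : (lcmUpTo k : ℤ) ∣ a) (x y : ZMod n) :
    ZMod.castHom hmn (ZMod m) (x - y) ∣
      (a : ZMod m) * ((x.val.choose k : ℕ) : ZMod m)
        - (a : ZMod m) * ((y.val.choose k : ℕ) : ZMod m) := by
  haveI : NeZero n := ⟨hn.ne'⟩
  obtain ⟨b, rfl⟩ := h
  have hdvd : ((x.val : ℤ) - y.val) ∣ ((lcmUpTo k : ℤ) * b) * ((x.val.choose k : ℤ) - (y.val.choose k : ℤ)) := by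
    have := (key2 x.val y.val k).mul_left b
    convert this using 1
    · rfl
    · ring
  have hxy : (((x.val : ℤ) - y.val : ℤ) : ZMod n) = x - y := by
    push_cast [ZMod.natCast_zmod_val]
    ring
  have hmap : ZMod.castHom hmn (ZMod m) (x - y) = (((x.val : ℤ) - y.val : ℤ) : ZMod m) := by
    rw [← hxy, map_intCast]
  rw [hmap]
  have goal_eq : (((lcmUpTo k : ℤ) * b : ℤ) : ZMod m) * ((x.val.choose k : ℕ) : ZMod m)
        - (((lcmUpTo k : ℤ) * b : ℤ) : ZMod m) * ((y.val.choose k : ℕ) : ZMod m)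
      = ((((lcmUpTo k : ℤ) * b) * ((x.val.choose k : ℤ) - (y.val.choose k : ℤ)) : ℤ) : ZMod m) := by
    push_cast; ring
  rw [goal_eq]
  exact map_dvd (Int.castRingHom (ZMod m)) hdvd
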